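/- Fix q ∈ (0,1), θ ∈ (0, π/2) and σ ∈ (0,1), and write σ̄ := 1 − σ. Define A : ℝ → ℝ by A(β) := σ̄·cos²θ + σ·sin²θ + 2·Real.sqrt(σ̄·σ)·cos θ·sin θ·cos β, define κ : ℝ × ℝ → ℝ by κ(α,β) := q·σ̄·cos²θ + σ·sin²θ + q·Real.sqrt(σ̄·σ)·cos θ·sin θ·(cos β + cos(β−α)), and define J : ℝ × ℝ → ℝ by J(α,β) := q·A(β)·Real.logb 2 (A(β)) + q·A(β−α)·Real.logb 2 (A(β−α)) + 2·(1−q)·σ·sin²θ·Real.logb 2 (σ·sin²θ) − 2·κ(α,β)·Real.logb 2 (κ(α,β)) − (1−q)·cos²θ·Real.logb 2 (1−q). If (α,β) ∈ ℝ × ℝ is a local maximum of J, then sin β = 0 and sin(β − α) = 0. -/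

import Mathlib

open Real Filter Set Topology

/-- `A θ σ β = |√(1−σ) cos θ + e^{iβ} √σ sin θ|²`. -/
noncomputable def A (θ σ β : ℝ) : ℝ :=
  (1 - σ) * Real.cos θ ^ 2 + σ * Real.sin θ ^ 2
    + 2 * Real.sqrt ((1 - σ) * σ) * Real.cos θ * Real.sin θ * Real.cos β

/-- The mixture weight κ(α,β) appearing in the symmetrized information functional. -/
noncomputable def kappa (q θ σ α β : ℝ) : ℝ :=
  q * (1 - σ) * Real.cos θ ^ 2 + σ * Real.sin θ ^ 2
    + q * Real.sqrt ((1 - σ) * σ) * Real.cos θ * Real.sin θ * (Real.cos β + Real.cos (β - α))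

/-- The symmetrized information functional `J(α,β)` of the one-sender
coherence-assisted protocol. -/
noncomputable def J (q θ σ : ℝ) (p : ℝ × ℝ) : ℝ :=
  q * A θ σ p.2 * Real.logb 2 (A θ σ p.2)
    + q * A θ σ (p.2 - p.1) * Real.logb 2 (A θ σ (p.2 - p.1))
    + 2 * (1 - q) * σ * Real.sin θ ^ 2 * Real.logb 2 (σ * Real.sin θ ^ 2)
    - 2 * kappa q θ σ p.1 p.2 * Real.logb 2 (kappa q θ σ p.1 p.2)
    - (1 - q) * Real.cos θ ^ 2 * Real.logb 2 (1 - q)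

lemma slope_frequently_gt {g : ℝ → ℝ} {d : ℝ} (hg : HasDerivAt g d 0) (hd : d ≠ 0) :
    ∃ᶠ t in 𝓝[≠] (0:ℝ), g 0 < g t := by
  rw [hasDerivAt_iff_tendsto_slope] at hg
  rcases hd.lt_or_gt with h | h
  · have hs : ∀ᶠ t in 𝓝[≠] (0:ℝ), slope g 0 t < 0 := hg (Iio_mem_nhds h)
    have hle : 𝓝[<] (0:ℝ) ≤ 𝓝[≠] 0 := nhdsWithin_mono 0 (fun x hx => ne_of_lt hx)
    have h0 : ∀ᶠ t in 𝓝[<] (0:ℝ), t < 0 := eventually_nhdsWithin_of_forall (fun x hx => hx)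
    have hfreq : ∃ᶠ t in 𝓝[≠] (0:ℝ), t < 0 := (h0.frequently).filter_mono hle
    refine (hfreq.and_eventually hs).mono ?_
    rintro t ⟨ht, hslope⟩
    have ht' : t ≠ 0 := ne_of_lt ht
    have h1 : g t - g 0 = slope g 0 t * t := by
      rw [slope_def_field]; field_simp; ring
    nlinarith [mul_pos_of_neg_of_neg hslope ht]
  · have hs : ∀ᶠ t in 𝓝[≠] (0:ℝ), 0 < slope g 0 t := hg (Ioi_mem_nhds h)
    have hle : 𝓝[>] (0:ℝ) ≤ 𝓝[≠] 0 := nhdsWithin_mono 0 (fun x hx => ne_of_gt hx)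
    have h0 : ∀ᶠ t in 𝓝[>] (0:ℝ), 0 < t := eventually_nhdsWithin_of_forall (fun x hx => hx)
    have hfreq : ∃ᶠ t in 𝓝[≠] (0:ℝ), 0 < t := (h0.frequently).filter_mono hle
    refine (hfreq.and_eventually hs).mono ?_
    rintro t ⟨ht, hslope⟩
    have ht' : t ≠ 0 := ne_of_gt ht
    have h1 : g t - g 0 = slope g 0 t * t := by
      rw [slope_def_field]; field_simp; ring
    nlinarith [mul_pos hslope ht]

lemma core_lemma (q m c1 n C Y c : ℝ) (f : ℝ → ℝ)
    (hq0 : 0 < q) (hq1 : q < 1) (hc1 : 0 < c1)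
    (ha : ∀ x : ℝ, -1 < x → 0 < m + c1 * x)
    (hk : ∀ s : ℝ, -2 ≤ s → 0 < n + q * c1 / 2 * s)
    (hY : Real.sin Y ≠ 0) (hc : c ∈ Set.Icc (-1:ℝ) 1)
    (hfeq : ∀ t, f t =
      (q * ((m + c1 * Real.cos (Y + t)) * Real.log (m + c1 * Real.cos (Y + t)))
        - 2 * ((n + q * c1 / 2 * (Real.cos (Y + t) + c)) *
            Real.log (n + q * c1 / 2 * (Real.cos (Y + t) + c)))) / Real.log 2 + C)
    (hmax : IsLocalMax f 0) : False := by
  -- basic facts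
  have hlog2 : (0:ℝ) < Real.log 2 := Real.log_pos one_lt_two
  set x₀ := Real.cos Y with hx₀def
  have hpyth := Real.sin_sq_add_cos_sq Y
  have hsY : 0 < Real.sin Y ^ 2 := by positivity
  have hx₀l : -1 < x₀ := by nlinarith
  have hx₀r : x₀ < 1 := by nlinarith
  have hva : 0 < m + c1 * x₀ := ha x₀ hx₀l
  have hvk : 0 < n + q * c1 / 2 * (x₀ + c) := hk _ (by nlinarith [hc.1])
  -- derivative of f at 0
  have hcos : HasDerivAt (fun t => Real.cos (Y + t)) (-Real.sin Y) 0 := by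
    have h1 : HasDerivAt (fun t : ℝ => Y + t) 1 0 := (hasDerivAt_id 0).const_add Y
    have h2 := (Real.hasDerivAt_cos (Y + 0)).comp 0 h1
    simpa [Function.comp_def] using h2
  have hA : HasDerivAt (fun t => m + c1 * Real.cos (Y + t)) (c1 * -Real.sin Y) 0 :=
    (hcos.const_mul c1).const_add m
  have hva' : (0:ℝ) < m + c1 * Real.cos (Y + 0) := by rw [add_zero]; exact hva
  have hLA : HasDerivAt
      (fun t => (m + c1 * Real.cos (Y + t)) * Real.log (m + c1 * Real.cos (Y + t)))
      ((Real.log (m + c1 * x₀) + 1) * (c1 * -Real.sin Y)) 0 := by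
    have h := (Real.hasDerivAt_mul_log (ne_of_gt hva')).comp (0:ℝ) hA
    simpa [Function.comp, Function.comp_def, add_zero] using h
  have hK : HasDerivAt (fun t => n + q * c1 / 2 * (Real.cos (Y + t) + c))
      (q * c1 / 2 * -Real.sin Y) 0 := by
    have := ((hcos.add_const c).const_mul (q * c1 / 2)).const_add n
    simpa using this
  have hK0 : n + q * c1 / 2 * (Real.cos (Y + 0) + c) = n + q * c1 / 2 * (x₀ + c) := by
    rw [add_zero]
  have hvk' : (0:ℝ) < n + q * c1 / 2 * (Real.cos (Y + 0) + c) := by rw [add_zero]; exact hvk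
  have hLK : HasDerivAt
      (fun t => (n + q * c1 / 2 * (Real.cos (Y + t) + c)) *
        Real.log (n + q * c1 / 2 * (Real.cos (Y + t) + c)))
      ((Real.log (n + q * c1 / 2 * (x₀ + c)) + 1) * (q * c1 / 2 * -Real.sin Y)) 0 := by
    have h := (Real.hasDerivAt_mul_log (ne_of_gt hvk')).comp (0:ℝ) hK
    simpa [Function.comp, Function.comp_def, add_zero] using h
  have hf' : HasDerivAt f
      ((q * ((Real.log (m + c1 * x₀) + 1) * (c1 * -Real.sin Y))
        - 2 * ((Real.log (n + q * c1 / 2 * (x₀ + c)) + 1) * (q * c1 / 2 * -Real.sin Y)))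
        / Real.log 2) 0 := by
    have h := (((hLA.const_mul q).sub (hLK.const_mul 2)).div_const (Real.log 2)).add_const C
    exact h.congr_of_eventuallyEq (by filter_upwards with t; rw [hfeq t]; rfl)
  have hzero := hmax.hasDerivAt_eq_zero hf'
  -- deduce equality of the two log arguments
  have hlogeq : Real.log (m + c1 * x₀) = Real.log (n + q * c1 / 2 * (x₀ + c)) := by
    have hne : Real.log 2 ≠ 0 := ne_of_gt hlog2
    have h2 : q * ((Real.log (m + c1 * x₀) + 1) * (c1 * -Real.sin Y))
        - 2 * ((Real.log (n + q * c1 / 2 * (x₀ + c)) + 1) * (q * c1 / 2 * -Real.sin Y)) = 0 :=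
      (div_eq_zero_iff.mp hzero).resolve_right hne
    have h3 : q * c1 * Real.sin Y *
        (Real.log (n + q * c1 / 2 * (x₀ + c)) - Real.log (m + c1 * x₀)) = 0 := by
      linear_combination h2
    have h4 : q * c1 * Real.sin Y ≠ 0 := by
      have : q * c1 > 0 := mul_pos hq0 hc1
      exact mul_ne_zero (ne_of_gt this) hY
    have := (mul_eq_zero.mp h3).resolve_left h4
    linarith
  have hveq : m + c1 * x₀ = n + q * c1 / 2 * (x₀ + c) := by
    have h1 := Real.exp_log hva
    have h2 := Real.exp_log hvk
    rw [← h1, ← h2, hlogeq]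
  -- strict monotonicity of ψ on [x₀, 1]
  set ψ : ℝ → ℝ := fun x => q * ((m + c1 * x) * Real.log (m + c1 * x))
      - 2 * ((n + q * c1 / 2 * (x + c)) * Real.log (n + q * c1 / 2 * (x + c))) with hψdef
  have hψd : ∀ x ∈ Set.Icc x₀ 1, HasDerivAt ψ
      (q * ((Real.log (m + c1 * x) + 1) * c1)
        - 2 * ((Real.log (n + q * c1 / 2 * (x + c)) + 1) * (q * c1 / 2))) x := by
    intro x hx
    have hax : 0 < m + c1 * x := ha x (lt_of_lt_of_le hx₀l hx.1)
    have hkx : 0 < n + q * c1 / 2 * (x + c) := hk _ (by nlinarith [hc.1, hx.1])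
    have h1 : HasDerivAt (fun x : ℝ => m + c1 * x) c1 x := by
      simpa using ((hasDerivAt_id x).const_mul c1).const_add m
    have h2 : HasDerivAt (fun x : ℝ => n + q * c1 / 2 * (x + c)) (q * c1 / 2) x := by
      simpa using (((hasDerivAt_id x).add_const c).const_mul (q * c1 / 2)).const_add n
    have hL1 := (Real.hasDerivAt_mul_log (ne_of_gt hax)).comp x h1
    have hL2 := (Real.hasDerivAt_mul_log (ne_of_gt hkx)).comp x h2
    exact ((hL1.const_mul q).sub (hL2.const_mul 2))
  have hmono : StrictMonoOn ψ (Set.Icc x₀ 1) := by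
    apply strictMonoOn_of_deriv_pos (convex_Icc x₀ 1)
    · exact fun x hx => ((hψd x hx).continuousAt).continuousWithinAt
    · intro x hx
      rw [interior_Icc] at hx
      have hx' : x ∈ Set.Icc x₀ 1 := Set.mem_Icc.mpr ⟨le_of_lt hx.1, le_of_lt hx.2⟩
      rw [(hψd x hx').deriv]
      have hax : 0 < m + c1 * x := ha x (lt_of_lt_of_le hx₀l hx'.1)
      have hkx : 0 < n + q * c1 / 2 * (x + c) := hk _ (by nlinarith [hc.1, hx'.1])
      have hgt : n + q * c1 / 2 * (x + c) < m + c1 * x := by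
        nlinarith [hveq, mul_pos (mul_pos hc1 (sub_pos.mpr hx.1)) (by linarith : (0:ℝ) < 2 - q)]
      have hloglt := Real.log_lt_log hkx hgt
      nlinarith [mul_pos hq0 hc1]
  -- contradiction
  have hgd : HasDerivAt (fun t => Real.cos (Y + t)) (-Real.sin Y) 0 := hcos
  have hfreq := slope_frequently_gt hgd (by simpa using hY)
  have hmax' : ∀ᶠ t in 𝓝[≠] (0:ℝ), f t ≤ f 0 := hmax.filter_mono nhdsWithin_le_nhds
  obtain ⟨t, hgt, hle⟩ := (hfreq.and_eventually hmax').exists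
  have hg0 : Real.cos (Y + 0) = x₀ := by rw [add_zero]
  rw [hg0] at hgt
  have hmemt : Real.cos (Y + t) ∈ Set.Icc x₀ 1 := ⟨le_of_lt hgt, Real.cos_le_one _⟩
  have hmem0 : x₀ ∈ Set.Icc x₀ 1 := ⟨le_refl _, le_of_lt hx₀r⟩
  have hψlt : ψ x₀ < ψ (Real.cos (Y + t)) := hmono hmem0 hmemt hgt
  have hftval : f t = ψ (Real.cos (Y + t)) / Real.log 2 + C := by rw [hfeq t]
  have hf0val : f 0 = ψ x₀ / Real.log 2 + C := by rw [hfeq 0, hg0]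
  rw [hftval, hf0val] at hle
  have hfin : ψ x₀ / Real.log 2 < ψ (Real.cos (Y + t)) / Real.log 2 := by gcongr
  linarith

/-- The paper's Lemma (optimal-alpha-beta): `J` is locally maximized only when
β and β − α are both multiples of π. -/
theorem localMax_J_implies_sin_eq_zero (q θ σ : ℝ)
    (hq : q ∈ Set.Ioo (0 : ℝ) 1) (hθ : θ ∈ Set.Ioo (0 : ℝ) (Real.pi / 2))
    (hσ : σ ∈ Set.Ioo (0 : ℝ) 1)
    (p : ℝ × ℝ) (hmax : IsLocalMax (J q θ σ) p) :
    Real.sin p.2 = 0 ∧ Real.sin (p.2 - p.1) = 0 := by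
  obtain ⟨hq0, hq1⟩ := hq
  obtain ⟨hθ0, hθ1⟩ := hθ
  obtain ⟨hσ0, hσ1⟩ := hσ
  have hπ := Real.pi_pos
  have hcθ : 0 < Real.cos θ := Real.cos_pos_of_mem_Ioo ⟨by linarith, hθ1⟩
  have hsθ : 0 < Real.sin θ := Real.sin_pos_of_pos_of_lt_pi hθ0 (by linarith)
  set m : ℝ := (1 - σ) * Real.cos θ ^ 2 + σ * Real.sin θ ^ 2 with hmdef
  set c1 : ℝ := 2 * Real.sqrt ((1 - σ) * σ) * Real.cos θ * Real.sin θ with hc1def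
  set n : ℝ := q * (1 - σ) * Real.cos θ ^ 2 + σ * Real.sin θ ^ 2 with hndef
  have hu : Real.sqrt (1 - σ) ^ 2 = 1 - σ := Real.sq_sqrt (by linarith)
  have hw : Real.sqrt σ ^ 2 = σ := Real.sq_sqrt (by linarith)
  have hs : Real.sqrt ((1 - σ) * σ) = Real.sqrt (1 - σ) * Real.sqrt σ :=
    Real.sqrt_mul (by linarith) σ
  have hu0 : 0 < Real.sqrt (1 - σ) := Real.sqrt_pos.mpr (by linarith)
  have hw0 : 0 < Real.sqrt σ := Real.sqrt_pos.mpr hσ0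
  have hc1 : 0 < c1 := by
    rw [hc1def, hs]; positivity
  have hmc1 : 0 ≤ m - c1 := by
    rw [hmdef, hc1def, hs]
    nlinarith [sq_nonneg (Real.sqrt (1 - σ) * Real.cos θ - Real.sqrt σ * Real.sin θ)]
  have ha : ∀ x : ℝ, -1 < x → 0 < m + c1 * x := by
    intro x hx
    nlinarith [mul_pos hc1 (by linarith : (0:ℝ) < 1 + x)]
  have hk : ∀ s' : ℝ, -2 ≤ s' → 0 < n + q * c1 / 2 * s' := by
    intro s' hs'
    have h1 : n - q * c1 = q * (m - c1) + (1 - q) * (σ * Real.sin θ ^ 2) := by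
      rw [hndef, hmdef]; ring
    have h2 : 0 < (1 - q) * (σ * Real.sin θ ^ 2) := by
      have : 0 < σ * Real.sin θ ^ 2 := by positivity
      nlinarith
    have h3 : -(q * c1) ≤ q * c1 / 2 * s' := by
      have h4 : (0:ℝ) ≤ q * c1 / 2 * (s' + 2) :=
        mul_nonneg (by nlinarith [mul_pos hq0 hc1]) (by linarith)
      nlinarith
    have h5 : 0 ≤ q * (m - c1) := mul_nonneg hq0.le hmc1
    linarith
  have hAeq : ∀ b : ℝ, A θ σ b = m + c1 * Real.cos b := by
    intro b; rw [A, hmdef, hc1def]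
  have hκeq : ∀ α β : ℝ, kappa q θ σ α β
      = n + q * c1 / 2 * (Real.cos β + Real.cos (β - α)) := by
    intro α β; rw [kappa, hndef, hc1def]; ring
  constructor
  · by_contra hsin
    have hg : ContinuousAt (fun t : ℝ => (p.1 + t, p.2 + t)) 0 := by fun_prop
    have hmax1 : IsLocalMax (J q θ σ ∘ fun t : ℝ => (p.1 + t, p.2 + t)) 0 := by
      apply IsLocalMax.comp_continuous _ hg
      show IsLocalMax (J q θ σ) (p.1 + 0, p.2 + 0)
      simpa using hmax
    refine core_lemma q m c1 n
      (q * A θ σ (p.2 - p.1) * Real.logb 2 (A θ σ (p.2 - p.1))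
        + 2 * (1 - q) * σ * Real.sin θ ^ 2 * Real.logb 2 (σ * Real.sin θ ^ 2)
        - (1 - q) * Real.cos θ ^ 2 * Real.logb 2 (1 - q))
      p.2 (Real.cos (p.2 - p.1)) (J q θ σ ∘ fun t : ℝ => (p.1 + t, p.2 + t))
      hq0 hq1 hc1 ha hk hsin ⟨Real.neg_one_le_cos _, Real.cos_le_one _⟩ ?_ hmax1
    intro t
    simp only [Function.comp_apply, J]
    rw [show p.2 + t - (p.1 + t) = p.2 - p.1 by ring]
    rw [hAeq (p.2 + t), hκeq (p.1 + t) (p.2 + t)]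
    rw [show p.2 + t - (p.1 + t) = p.2 - p.1 by ring]
    simp only [Real.logb]
    ring
  · by_contra hsin
    have hg : ContinuousAt (fun t : ℝ => (p.1 - t, p.2)) 0 := by fun_prop
    have hmax1 : IsLocalMax (J q θ σ ∘ fun t : ℝ => (p.1 - t, p.2)) 0 := by
      apply IsLocalMax.comp_continuous _ hg
      show IsLocalMax (J q θ σ) (p.1 - 0, p.2)
      simpa using hmax
    refine core_lemma q m c1 n
      (q * A θ σ p.2 * Real.logb 2 (A θ σ p.2)
        + 2 * (1 - q) * σ * Real.sin θ ^ 2 * Real.logb 2 (σ * Real.sin θ ^ 2)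
        - (1 - q) * Real.cos θ ^ 2 * Real.logb 2 (1 - q))
      (p.2 - p.1) (Real.cos p.2) (J q θ σ ∘ fun t : ℝ => (p.1 - t, p.2))
      hq0 hq1 hc1 ha hk hsin ⟨Real.neg_one_le_cos _, Real.cos_le_one _⟩ ?_ hmax1
    intro t
    simp only [Function.comp_apply, J]
    rw [show p.2 - (p.1 - t) = p.2 - p.1 + t by ring]
    rw [hAeq (p.2 - p.1 + t)]
    rw [show kappa q θ σ (p.1 - t) p.2
        = n + q * c1 / 2 * (Real.cos (p.2 - p.1 + t) + Real.cos p.2) by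
      rw [kappa, hndef, hc1def, show p.2 - (p.1 - t) = p.2 - p.1 + t by ring]; ring]
    simp only [Real.logb]
    ring
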